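/- arXiv:1807.01486 — 2 statements merged into one kernel-verified Lean document; each statement's English description precedes it below -/
import Mathlib

section
/- For the Exponentiated Quadratic kernel k(x, x′) = exp(−‖x − x′‖²/(2ℓ²)) and X ~ N(μ, Σ) on ℝ^d with Σ diagonal with entries s_i², the expectation E[k(X, z)] equals ∏ᵢ (ℓ/√(ℓ² + s_i²)) · exp(−(μ_i − z_i)²/(2(ℓ² + s_i²))). -/
open MeasureTheory ProbabilityTheory Real

lemma gauss_one_dim (ℓ : ℝ) (hℓ : 0 < ℓ) (m s z : ℝ) :
    ∫ x : ℝ, Real.exp (-(x - z) ^ 2 / (2 * ℓ ^ 2)) ∂(gaussianReal m (Real.toNNReal (s ^ 2))) =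
      (ℓ / Real.sqrt (ℓ ^ 2 + s ^ 2)) *
        Real.exp (-(m - z) ^ 2 / (2 * (ℓ ^ 2 + s ^ 2))) := by
  by_cases hs : s = 0
  · subst hs
    simp only [ne_eq, OfNat.ofNat_ne_zero, not_false_eq_true, zero_pow, Real.toNNReal_zero,
      gaussianReal_zero_var, integral_dirac, add_zero]
    rw [Real.sqrt_sq hℓ.le, div_self hℓ.ne', one_mul]
  · have hs2 : (0 : ℝ) < s ^ 2 := by positivity
    have hv : Real.toNNReal (s ^ 2) ≠ 0 := by
      simp [Real.toNNReal_eq_zero, not_le, hs2, hs]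
    have hvcoe : ((Real.toNNReal (s ^ 2)) : ℝ) = s ^ 2 := Real.coe_toNNReal _ hs2.le
    rw [gaussianReal_of_var_ne_zero _ hv]
    have hmeas : Measurable fun x => (gaussianPDFReal m (Real.toNNReal (s ^ 2)) x).toNNReal :=
      (measurable_gaussianPDFReal _ _).real_toNNReal
    rw [show gaussianPDF m (Real.toNNReal (s ^ 2))
        = fun x => ((gaussianPDFReal m (Real.toNNReal (s ^ 2)) x).toNNReal : ENNReal) from rfl,
      integral_withDensity_eq_integral_smul hmeas]
    simp only [NNReal.smul_def, Real.coe_toNNReal _ (gaussianPDFReal_nonneg _ _ _), smul_eq_mul]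
    simp only [gaussianPDFReal, hvcoe]
    set a : ℝ := (s ^ 2 + ℓ ^ 2) / (2 * s ^ 2 * ℓ ^ 2) with ha
    set c : ℝ := (ℓ ^ 2 * m + s ^ 2 * z) / (s ^ 2 + ℓ ^ 2) with hc
    have hden : s ^ 2 + ℓ ^ 2 ≠ 0 := by positivity
    have key : (fun x : ℝ => (√(2 * π * s ^ 2))⁻¹ * rexp (-(x - m) ^ 2 / (2 * s ^ 2)) *
          rexp (-(x - z) ^ 2 / (2 * ℓ ^ 2)))
        = fun x : ℝ => ((√(2 * π * s ^ 2))⁻¹ * rexp (-(m - z) ^ 2 / (2 * (ℓ ^ 2 + s ^ 2)))) *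
          rexp (-a * (x - c) ^ 2) := by
      funext x
      have h : -(x - m) ^ 2 / (2 * s ^ 2) + -(x - z) ^ 2 / (2 * ℓ ^ 2)
          = -(m - z) ^ 2 / (2 * (ℓ ^ 2 + s ^ 2)) + -a * (x - c) ^ 2 := by
        rw [ha, hc]; field_simp; ring
      rw [mul_assoc, ← Real.exp_add, h, Real.exp_add, ← mul_assoc]
    rw [key, integral_const_mul,
      integral_sub_right_eq_self (fun x => rexp (-a * x ^ 2)) c, integral_gaussian]
    have hπa : π / a = 2 * π * s ^ 2 * (ℓ ^ 2 / (ℓ ^ 2 + s ^ 2)) := by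
      rw [ha]
      field_simp
      ring
    have hsplit : √(2 * π * s ^ 2 * (ℓ ^ 2 / (ℓ ^ 2 + s ^ 2)))
        = √(2 * π) * √(s ^ 2) * (ℓ / √(ℓ ^ 2 + s ^ 2)) := by
      rw [Real.sqrt_mul (by positivity), Real.sqrt_mul (by positivity : (0:ℝ) ≤ 2 * π),
        Real.sqrt_div (sq_nonneg ℓ), Real.sqrt_sq hℓ.le]
    rw [hπa, hsplit]
    have h2π : √(2 * π) ≠ 0 := by positivity
    have hss : √(s ^ 2) ≠ 0 := Real.sqrt_ne_zero'.mpr hs2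
    rw [Real.sqrt_mul (by positivity : (0:ℝ) ≤ 2 * π) (s ^ 2)]
    field_simp

theorem eq_kernel_gaussian_expectation {d : ℕ} (ℓ : ℝ) (hℓ : 0 < ℓ)
    (μ s : Fin d → ℝ) (z : Fin d → ℝ) :
    ∫ x : Fin d → ℝ,
        Real.exp (-(∑ i, (x i - z i) ^ 2) / (2 * ℓ ^ 2))
        ∂(Measure.pi fun i => gaussianReal (μ i) (Real.toNNReal (s i ^ 2))) =
      ∏ i, (ℓ / Real.sqrt (ℓ ^ 2 + s i ^ 2)) *
        Real.exp (-(μ i - z i) ^ 2 / (2 * (ℓ ^ 2 + s i ^ 2))) := by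
  have h1 : ∀ x : Fin d → ℝ,
      Real.exp (-(∑ i, (x i - z i) ^ 2) / (2 * ℓ ^ 2))
        = ∏ i, Real.exp (-(x i - z i) ^ 2 / (2 * ℓ ^ 2)) := by
    intro x
    rw [← Real.exp_sum]
    congr 1
    simp [neg_div, Finset.sum_div]
  have h2 := @MeasureTheory.integral_fintype_prod_eq_prod ℝ (Fin d) _ _ (fun _ => ℝ)
    (fun i x => Real.exp (-(x - z i) ^ 2 / (2 * ℓ ^ 2)))
    _ (fun i => gaussianReal (μ i) (Real.toNNReal (s i ^ 2)))
    (fun i => inferInstanceAs (SigmaFinite (gaussianReal (μ i) (Real.toNNReal (s i ^ 2)))))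
  calc ∫ x : Fin d → ℝ, Real.exp (-(∑ i, (x i - z i) ^ 2) / (2 * ℓ ^ 2))
        ∂(Measure.pi fun i => gaussianReal (μ i) (Real.toNNReal (s i ^ 2)))
      = ∫ x : Fin d → ℝ, ∏ i, Real.exp (-(x i - z i) ^ 2 / (2 * ℓ ^ 2))
        ∂(Measure.pi fun i => gaussianReal (μ i) (Real.toNNReal (s i ^ 2))) := by
        congr 1; funext x; exact h1 x
    _ = ∏ i, ∫ x : ℝ, Real.exp (-(x - z i) ^ 2 / (2 * ℓ ^ 2))
          ∂(gaussianReal (μ i) (Real.toNNReal (s i ^ 2))) := h2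
    _ = ∏ i, (ℓ / Real.sqrt (ℓ ^ 2 + s i ^ 2)) *
          Real.exp (-(μ i - z i) ^ 2 / (2 * (ℓ ^ 2 + s i ^ 2))) :=
        Finset.prod_congr rfl fun i _ => gauss_one_dim ℓ hℓ (μ i) (s i) (z i)
end

section
/- If k : ℝ^d × ℝ^d → ℝ is a C² positive semidefinite kernel, then the derivative kernel k^{∂}(x, x′) = ∂²k/∂x_i∂x′_i (for a fixed coordinate i) is itself a positive semidefinite kernel. -/
open ContinuousLinearMap Asymptotics Filter Finset

section aux

variable {E : Type*} [NormedAddCommGroup E] [NormedSpace ℝ E]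

theorem aux_kD_eq (k : E → E → ℝ) (hk : ContDiff ℝ 2 (Function.uncurry k)) (e : E) (x y : E) :
    fderiv ℝ (fun a => fderiv ℝ (fun b => k a b) y e) x e
      = fderiv ℝ (fderiv ℝ (Function.uncurry k)) (x, y) (e, 0) ((0 : E), e) := by
  set f := Function.uncurry k with hf
  have hdf : Differentiable ℝ f := hk.differentiable (by norm_num)
  have hf' : ContDiff ℝ 1 (fderiv ℝ f) := hk.fderiv_right (by norm_num)
  have key : ∀ a b : E, fderiv ℝ (fun b => k a b) b = (fderiv ℝ f (a, b)).comp (inr ℝ E E) := by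
    intro a b
    have h1 : HasFDerivAt (fun b : E => (a, b)) (inr ℝ E E) b := hasFDerivAt_prodMk_right a b
    have h2 : HasFDerivAt f (fderiv ℝ f (a, b)) (a, b) := (hdf (a, b)).hasFDerivAt
    exact (h2.comp b h1).fderiv
  have hg : ∀ a : E, fderiv ℝ (fun b => k a b) y e = fderiv ℝ f (a, y) (0, e) := by
    intro a; rw [key a y]; simp
  have h1 : HasFDerivAt (fun a : E => (a, y)) (inl ℝ E E) x := hasFDerivAt_prodMk_left x y
  have h2 : HasFDerivAt (fderiv ℝ f) (fderiv ℝ (fderiv ℝ f) (x, y)) (x, y) :=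
    ((hf'.differentiable one_ne_zero) (x, y)).hasFDerivAt
  have h3 : HasFDerivAt (fun a : E => fderiv ℝ f (a, y) ((0 : E), e))
      (((apply ℝ ℝ ((0 : E), e)).comp (fderiv ℝ (fderiv ℝ f) (x, y))).comp (inl ℝ E E)) x :=
    ((apply ℝ ℝ ((0 : E), e)).hasFDerivAt.comp _ (h2.comp x h1) : _)
  calc fderiv ℝ (fun a => fderiv ℝ (fun b => k a b) y e) x e
      = fderiv ℝ (fun a : E => fderiv ℝ f (a, y) ((0 : E), e)) x e := by
        congr 1; exact congrArg (fun g => fderiv ℝ g x) (funext hg)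
    _ = fderiv ℝ (fderiv ℝ f) (x, y) (e, 0) ((0 : E), e) := by
        rw [h3.fderiv]; simp

theorem aux_limit (S : ℝ → ℝ) (q : ℝ)
    (hS : ∀ h : ℝ, 0 < h → 0 ≤ S h)
    (ho : (fun h : ℝ => S h - h ^ 2 * q) =o[nhdsWithin 0 (Set.Ioi 0)] fun h => h ^ 2) :
    0 ≤ q := by
  have T0 : Filter.Tendsto (fun h : ℝ => (S h - h ^ 2 * q) / h ^ 2)
      (nhdsWithin 0 (Set.Ioi 0)) (nhds 0) := ho.tendsto_div_nhds_zero
  have T1 : Filter.Tendsto (fun h : ℝ => S h / h ^ 2)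
      (nhdsWithin 0 (Set.Ioi 0)) (nhds q) := by
    have := T0.add (tendsto_const_nhds (x := q) (f := nhdsWithin (0:ℝ) (Set.Ioi 0)))
    rw [zero_add] at this
    refine this.congr' ?_
    filter_upwards [self_mem_nhdsWithin] with h hh
    have h0 : (h:ℝ) ^ 2 ≠ 0 := pow_ne_zero _ (ne_of_gt hh)
    rw [sub_div, mul_div_cancel_left₀ q h0]; ring
  refine ge_of_tendsto T1 ?_
  filter_upwards [self_mem_nhdsWithin] with h hh
  exact div_nonneg (hS h hh) (by positivity)

end aux

theorem derivative_kernel_posSemidef {d : ℕ}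
    (k : (Fin d → ℝ) → (Fin d → ℝ) → ℝ)
    (hk : ContDiff ℝ 2 (Function.uncurry k))
    (hpsd : ∀ (n : ℕ) (pts : Fin n → (Fin d → ℝ)) (c : Fin n → ℝ),
      0 ≤ ∑ a, ∑ b, c a * c b * k (pts a) (pts b))
    (i : Fin d)
    (kD : (Fin d → ℝ) → (Fin d → ℝ) → ℝ)
    (hkD : kD = fun x y =>
      fderiv ℝ (fun a => fderiv ℝ (fun b => k a b) y (Pi.single i 1)) x
        (Pi.single i 1)) :
    ∀ (n : ℕ) (pts : Fin n → (Fin d → ℝ)) (c : Fin n → ℝ),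
      0 ≤ ∑ a, ∑ b, c a * c b * kD (pts a) (pts b) := by
  intro n pts c
  let E := (Fin d → ℝ)
  show (0:ℝ) ≤ _
  set e : E := Pi.single i 1 with he
  set f := Function.uncurry k with hf
  have hdf : Differentiable ℝ f := hk.differentiable (by norm_num)
  have hf' : ContDiff ℝ 1 (fderiv ℝ f) := hk.fderiv_right (by norm_num)
  set q : Fin n → Fin n → ℝ :=
    fun a b => fderiv ℝ (fderiv ℝ f) (pts a, pts b) (e, 0) ((0 : E), e) with hq
  -- identify the goal sum with Q
  have hgoal : ∑ a, ∑ b, c a * c b * kD (pts a) (pts b) = ∑ a, ∑ b, c a * c b * q a b := by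
    refine Finset.sum_congr rfl fun a _ => Finset.sum_congr rfl fun b _ => ?_
    rw [hkD, hq]
    simp only []
    rw [aux_kD_eq k hk e (pts a) (pts b)]
  rw [hgoal]
  set Q : ℝ := ∑ a, ∑ b, c a * c b * q a b with hQ
  -- the double difference quadratic form
  set A : Fin n → Fin n → ℝ → ℝ := fun a b h =>
    k (pts a + (2 * h) • e) (pts b + (2 * h) • e) + k (pts a + h • e) (pts b + h • e)
      - k (pts a + (2 * h) • e) (pts b + h • e) - k (pts a + h • e) (pts b + (2 * h) • e)
    with hA
  set S : ℝ → ℝ := fun h => ∑ a, ∑ b, c a * c b * A a b h with hS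
  refine aux_limit S Q ?_ ?_
  · -- positivity of S from PSD of k
    intro h _
    have key := hpsd (n + n)
      (Fin.append (fun a => pts a + h • e) (fun a => pts a + (2 * h) • e))
      (Fin.append c (fun a => -(c a)))
    simp only [Fin.sum_univ_add, Fin.append_left, Fin.append_right] at key
    refine le_trans key (le_of_eq ?_)
    simp only [hS, hA]
    simp only [← Finset.sum_add_distrib]
    refine Finset.sum_congr rfl fun a _ => Finset.sum_congr rfl fun b _ => ?_
    ring
  · -- littleO from Taylor expansion
    have hvw : ∀ (p r : E) (h : ℝ),
        (p, r) + h • ((2 : ℕ) • ((e, 0) : E × E) + (2 : ℕ) • (((0 : E), e) : E × E))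
          = (p + (2 * h) • e, r + (2 * h) • e) := by
      intro p r h
      simp only [Prod.ext_iff, Prod.smul_def, Prod.mk_add_mk, Prod.fst_add, Prod.snd_add]
      constructor <;> · simp [two_smul, smul_add]; try module
    have hvw2 : ∀ (p r : E) (h : ℝ),
        (p, r) + h • ((((e, 0) : E × E)) + (((0 : E), e) : E × E))
          = (p + h • e, r + h • e) := by
      intro p r h
      simp only [Prod.ext_iff, Prod.mk_add_mk, Prod.fst_add, Prod.snd_add]
      constructor <;> · simp [smul_add]; try module
    have hvw3 : ∀ (p r : E) (h : ℝ),
        (p, r) + h • ((2 : ℕ) • ((e, 0) : E × E) + (((0 : E), e) : E × E))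
          = (p + (2 * h) • e, r + h • e) := by
      intro p r h
      simp only [Prod.ext_iff, Prod.mk_add_mk, Prod.fst_add, Prod.snd_add]
      constructor <;> · simp [two_smul, smul_add]; try module
    have hvw4 : ∀ (p r : E) (h : ℝ),
        (p, r) + h • (((e, 0) : E × E) + (2 : ℕ) • (((0 : E), e) : E × E))
          = (p + h • e, r + (2 * h) • e) := by
      intro p r h
      simp only [Prod.ext_iff, Prod.mk_add_mk, Prod.fst_add, Prod.snd_add]
      constructor <;> · simp [two_smul, smul_add]; try module
    have perpair : ∀ a b : Fin n,
        (fun h : ℝ => c a * c b * A a b h - h ^ 2 * (c a * c b * q a b))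
          =o[nhdsWithin 0 (Set.Ioi 0)] fun h => h ^ 2 := by
      intro a b
      have hfd : ∀ z ∈ interior (Set.univ : Set (E × E)), HasFDerivAt f (fderiv ℝ f z) z :=
        fun z _ => (hdf z).hasFDerivAt
      have hx : HasFDerivWithinAt (fderiv ℝ f)
          (fderiv ℝ (fderiv ℝ f) (pts a, pts b)) (interior (Set.univ : Set (E × E)))
          (pts a, pts b) :=
        (((hf'.differentiable one_ne_zero) (pts a, pts b)).hasFDerivAt).hasFDerivWithinAt
      have O := convex_univ.isLittleO_alternate_sum_square (v := ((e, 0) : E × E))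
        (w := (((0 : E), e) : E × E)) hfd (Set.mem_univ (pts a, pts b)) hx
        (by simp) (by simp)
      have O2 := O.const_mul_left (c a * c b)
      refine (O2.congr' ?_ (EventuallyEq.rfl)).mono le_rfl
      filter_upwards with h
      simp only [hA]
      rw [hvw, hvw2, hvw3, hvw4]
      simp only [hf, Function.uncurry_apply_pair, smul_eq_mul, hq]
      ring
    have sum2 : (fun h : ℝ => ∑ a, ∑ b,
        (c a * c b * A a b h - h ^ 2 * (c a * c b * q a b)))
          =o[nhdsWithin 0 (Set.Ioi 0)] fun h => h ^ 2 :=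
      IsLittleO.fun_sum fun a _ => IsLittleO.fun_sum fun b _ => perpair a b
    refine sum2.congr' ?_ EventuallyEq.rfl
    filter_upwards with h
    simp only [hS, hQ, Finset.sum_sub_distrib, Finset.mul_sum]
end
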